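/- Let W be a finite Coxeter group with generating set S of simple reflections, let sgn: W → {±1} be the sign character, and let σ := (1/|S|)·Σ_{s∈S} s ∈ ℚ[W]. Then in the group algebra ℝ[W], the sequence σ^{2k} converges (as k → ∞, coefficientwise) to (1/|W₀|)·Σ_{w∈W₀} w, where W₀ = {w ∈ W : sgn(w) = 1}, and σ^{2k+1} converges to (1/|W₁|)·Σ_{w∈W₁} w, where W₁ = {w ∈ W : sgn(w) = −1}. -/

import Mathlib

open Finset Filter

namespace Stmt8Aux

variable {B W : Type*} [Fintype B] [Nonempty B] [Group W] [Fintype W]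
  {M : CoxeterMatrix B} (cs : CoxeterSystem M W)

private lemma sum_mulLeft (g : W) (f : W → ℝ) : ∑ w, f (g * w) = ∑ w, f w :=
  Fintype.sum_bijective _ (Group.mulLeft_bijective g) _ _ (fun _ => rfl)

noncomputable def T : EuclideanSpace ℝ W →ₗ[ℝ] EuclideanSpace ℝ W where
  toFun x := WithLp.toLp 2 (fun w => (Fintype.card B : ℝ)⁻¹ * ∑ i, x (cs.simple i * w))
  map_add' x y := PiLp.ext fun w => by
    simp [Finset.sum_add_distrib, mul_add]
  map_smul' c x := PiLp.ext fun w => by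
    simp only [PiLp.smul_apply, smul_eq_mul, RingHom.id_apply, Finset.mul_sum]
    exact Finset.sum_congr rfl fun i _ => by ring

lemma T_apply (x : EuclideanSpace ℝ W) (w : W) :
    T cs x w = (Fintype.card B : ℝ)⁻¹ * ∑ i, x (cs.simple i * w) := rfl

noncomputable def one : EuclideanSpace ℝ W := WithLp.toLp 2 (fun _ => (1 : ℝ))

noncomputable def sg : EuclideanSpace ℝ W :=
  WithLp.toLp 2 (fun w => if Even (cs.length w) then (1 : ℝ) else -1)

lemma sg_simple_mul (i : B) (w : W) : sg cs (cs.simple i * w) = - sg cs w := by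
  have h := cs.length_mul_mod_two (cs.simple i) w
  rw [cs.length_simple] at h
  have : Even (cs.length (cs.simple i * w)) ↔ ¬ Even (cs.length w) := by
    rw [Nat.even_iff, Nat.even_iff, h, Nat.add_mod]
    omega
  by_cases hw : Even (cs.length w) <;> simp [sg, this, hw]

lemma T_one : T cs (one : EuclideanSpace ℝ W) = one := by
  ext w
  have hB : (0 : ℝ) < (Fintype.card B : ℝ) := by
    exact_mod_cast Fintype.card_pos
  simp [T_apply, one]

lemma T_sg : T cs (sg cs) = - sg cs := by
  ext w
  have hB : (Fintype.card B : ℝ) ≠ 0 := by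
    exact_mod_cast Fintype.card_ne_zero
  have : ∀ i : B, sg cs (cs.simple i * w) = - sg cs w := fun i => sg_simple_mul cs i w
  simp only [T_apply, this, Finset.sum_const, card_univ, nsmul_eq_mul]
  show (Fintype.card B : ℝ)⁻¹ * _ = -(sg cs w)
  field_simp

lemma simple_cancel (i : B) (w : W) : cs.simple i * (cs.simple i * w) = w := by
  rw [← mul_assoc, ← sq, cs.simple_sq, one_mul]

lemma Tsym : (T cs).IsSymmetric := by
  intro x y
  have key : ∀ i : B, ∑ w, x (cs.simple i * w) * y w = ∑ w, y (cs.simple i * w) * x w := by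
    intro i
    refine Fintype.sum_bijective _ (Group.mulLeft_bijective (cs.simple i)) _ _ fun w => ?_
    rw [simple_cancel, mul_comm]
  have step : ∀ u v : EuclideanSpace ℝ W,
      ∑ w, ((Fintype.card B : ℝ)⁻¹ * ∑ i, u (cs.simple i * w)) * v w
        = (Fintype.card B : ℝ)⁻¹ * ∑ i, ∑ w, u (cs.simple i * w) * v w := by
    intro u v
    simp_rw [mul_assoc, Finset.sum_mul]
    rw [← Finset.mul_sum, Finset.sum_comm]
  simp only [PiLp.inner_apply, RCLike.inner_apply', starRingEnd_apply, star_trivial, T_apply]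
  calc ∑ w, ((Fintype.card B : ℝ)⁻¹ * ∑ i, x (cs.simple i * w)) * y w
      = (Fintype.card B : ℝ)⁻¹ * ∑ i, ∑ w, x (cs.simple i * w) * y w := step x y
    _ = (Fintype.card B : ℝ)⁻¹ * ∑ i, ∑ w, y (cs.simple i * w) * x w := by simp_rw [key]
    _ = ∑ w, ((Fintype.card B : ℝ)⁻¹ * ∑ i, y (cs.simple i * w)) * x w := (step y x).symm
    _ = ∑ w, x w * ((Fintype.card B : ℝ)⁻¹ * ∑ i, y (cs.simple i * w)) :=
        Finset.sum_congr rfl fun w _ => mul_comm _ _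

set_option linter.unusedSectionVars false

noncomputable def shift (x : EuclideanSpace ℝ W) (i : B) : EuclideanSpace ℝ W :=
  WithLp.toLp 2 (fun w => x (cs.simple i * w))

lemma shift_apply (x : EuclideanSpace ℝ W) (i : B) (w : W) :
    shift cs x i w = x (cs.simple i * w) := rfl

lemma norm_reindex (i : B) (x : EuclideanSpace ℝ W) : ‖shift cs x i‖ = ‖x‖ := by
  rw [show ‖shift cs x i‖ = Real.sqrt (∑ w, ‖shift cs x i w‖ ^ 2) from
      EuclideanSpace.norm_eq _,
    show ‖x‖ = Real.sqrt (∑ w, ‖x w‖ ^ 2) from EuclideanSpace.norm_eq _]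
  congr 1
  exact sum_mulLeft (cs.simple i) fun w => ‖x w‖ ^ 2

lemma T_norm_le (x : EuclideanSpace ℝ W) : ‖T cs x‖ ≤ ‖x‖ := by
  have hrepr : T cs x = (Fintype.card B : ℝ)⁻¹ • ∑ i : B, shift cs x i := by
    ext w
    rw [T_apply]
    have h2 : (∑ i : B, shift cs x i) w = ∑ i : B, shift cs x i w :=
      by rw [WithLp.ofLp_sum, Finset.sum_apply]
    show _ = (Fintype.card B : ℝ)⁻¹ * (∑ i : B, shift cs x i) w
    rw [h2]
    rfl
  have hB : (0:ℝ) ≤ (Fintype.card B : ℝ)⁻¹ := by positivity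
  calc ‖T cs x‖ = (Fintype.card B : ℝ)⁻¹ * ‖∑ i : B, shift cs x i‖ := by
        rw [hrepr, norm_smul, Real.norm_eq_abs, abs_of_nonneg hB]
    _ ≤ (Fintype.card B : ℝ)⁻¹ * ∑ i : B, ‖shift cs x i‖ := by
        gcongr
        exact norm_sum_le _ _
    _ = ‖x‖ := by
        simp only [norm_reindex, Finset.sum_const, card_univ, nsmul_eq_mul]
        have hB' : (Fintype.card B : ℝ) ≠ 0 := by
          exact_mod_cast Fintype.card_ne_zero
        field_simp

lemma fixed_const (y : EuclideanSpace ℝ W) (hy : T cs y = y) (v w : W) : y v = y w := by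
  obtain ⟨w₀, -, hmax⟩ := Finset.exists_max_image (univ : Finset W) y ⟨1, mem_univ 1⟩
  have step : ∀ u : W, y u = y w₀ → ∀ i : B, y (cs.simple i * u) = y w₀ := by
    intro u hu i
    by_contra hne
    have hlt : y (cs.simple i * u) < y w₀ := lt_of_le_of_ne (hmax _ (mem_univ _)) hne
    have hyu : (Fintype.card B : ℝ)⁻¹ * ∑ j, y (cs.simple j * u) = y u := by
      have : (T cs y) u = y u := by rw [hy]
      rw [T_apply] at this
      exact this
    have hB : (0:ℝ) < (Fintype.card B : ℝ) := by exact_mod_cast Fintype.card_pos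
    have hsum : ∑ j : B, y (cs.simple j * u) = ∑ _j : B, y w₀ := by
      calc ∑ j : B, y (cs.simple j * u)
          = (Fintype.card B : ℝ) * ((Fintype.card B : ℝ)⁻¹ * ∑ j, y (cs.simple j * u)) := by
            field_simp
        _ = (Fintype.card B : ℝ) * y w₀ := by rw [hyu, hu]
        _ = ∑ _j : B, y w₀ := by
            simp [Finset.sum_const, card_univ, nsmul_eq_mul]
    have hstrict : ∑ j : B, y (cs.simple j * u) < ∑ _j : B, y w₀ :=
      Finset.sum_lt_sum (fun j _ => hmax _ (mem_univ _)) ⟨i, mem_univ i, hlt⟩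
    exact absurd hsum (ne_of_lt hstrict)
  have all : ∀ l : List B, y (cs.wordProd l * w₀) = y w₀ := by
    intro l
    induction l with
    | nil => rw [cs.wordProd_nil, one_mul]
    | cons i l ih =>
        rw [cs.wordProd_cons, mul_assoc]
        exact step _ ih i
  have hall : ∀ u : W, y u = y w₀ := by
    intro u
    obtain ⟨l, hl⟩ := cs.wordProd_surjective (u * w₀⁻¹)
    have h2 : cs.wordProd l * w₀ = u := by rw [hl]; group
    rw [← h2]; exact all l
  rw [hall v, hall w]

lemma sg_sq (w : W) : sg cs w * sg cs w = 1 := by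
  by_cases h : Even (cs.length w) <;> simp [sg, h]

lemma anti_const (y : EuclideanSpace ℝ W) (hy : T cs y = -y) :
    ∃ c : ℝ, ∀ w, y w = sg cs w * c := by
  set z : EuclideanSpace ℝ W := WithLp.toLp 2 (fun w => sg cs w * y w) with hz
  have hTz : T cs z = z := by
    ext v
    have h1 : ∀ i : B, z (cs.simple i * v) = (- sg cs v) * y (cs.simple i * v) := by
      intro i
      show sg cs (cs.simple i * v) * y (cs.simple i * v) = _
      rw [sg_simple_mul]
    calc T cs z v = (Fintype.card B : ℝ)⁻¹ * ∑ i, z (cs.simple i * v) := T_apply cs z v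
      _ = (- sg cs v) * ((Fintype.card B : ℝ)⁻¹ * ∑ i, y (cs.simple i * v)) := by
          simp_rw [h1, ← Finset.mul_sum]
          ring
      _ = (- sg cs v) * T cs y v := by rw [T_apply]
      _ = (- sg cs v) * (- y v) := by rw [hy]; rfl
      _ = z v := by show _ = sg cs v * y v; ring
  refine ⟨z 1, fun w => ?_⟩
  have h1 : z w = z 1 := fixed_const cs z hTz w 1
  calc y w = sg cs w * (sg cs w * y w) := by rw [← mul_assoc, sg_sq, one_mul]
    _ = sg cs w * z 1 := by rw [← h1]

end Stmt8Aux

open Stmt8Aux Finset Filter in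
set_option maxHeartbeats 2000000 in
theorem stmt_8 {B W : Type*} [Fintype B] [Nonempty B] [Group W] [Fintype W]
    {M : CoxeterMatrix B} (cs : CoxeterSystem M W)
    (σ : MonoidAlgebra ℝ W)
    (hσ : σ = (Fintype.card B : ℝ)⁻¹ •
      ∑ i : B, MonoidAlgebra.single (cs.simple i) (1 : ℝ)) :
    ∀ w : W,
      Filter.Tendsto (fun k : ℕ => (σ ^ (2 * k)).coeff w) Filter.atTop
        (nhds (if Even (cs.length w) then
          (Nat.card {u : W // Even (cs.length u)} : ℝ)⁻¹ else 0)) ∧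
      Filter.Tendsto (fun k : ℕ => (σ ^ (2 * k + 1)).coeff w) Filter.atTop
        (nhds (if ¬ Even (cs.length w) then
          (Nat.card {u : W // ¬ Even (cs.length u)} : ℝ)⁻¹ else 0)) := by
  classical
  have hsym := Tsym cs
  have hn : Module.finrank ℝ (EuclideanSpace ℝ W) = Fintype.card W := finrank_euclideanSpace
  obtain ⟨b, μ, hb⟩ : ∃ (b : OrthonormalBasis (Fin (Fintype.card W)) ℝ (EuclideanSpace ℝ W))
      (μ : Fin (Fintype.card W) → ℝ), ∀ i, T cs (b i) = μ i • b i :=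
    ⟨hsym.eigenvectorBasis hn, hsym.eigenvalues hn,
      fun i => by simpa using hsym.apply_eigenvectorBasis hn i⟩
  -- eigenvalue bound
  have hμ1 : ∀ i, (μ i) ^ 2 ≤ 1 := by
    intro i
    have h1 : ‖T cs (b i)‖ ≤ ‖b i‖ := T_norm_le cs _
    have hbi : ‖b i‖ = 1 := b.orthonormal.1 i
    rw [hb i, norm_smul, Real.norm_eq_abs, hbi, mul_one] at h1
    calc (μ i) ^ 2 = |μ i| ^ 2 := (sq_abs _).symm
      _ ≤ 1 := by nlinarith [abs_nonneg (μ i)]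
  -- action of T on coordinates
  have repr_T : ∀ (x : EuclideanSpace ℝ W) (i), b.repr (T cs x) i = μ i * b.repr x i := by
    intro x i
    rw [b.repr_apply_apply, b.repr_apply_apply, ← hsym (b i) x, hb i, real_inner_smul_left]
  set δ : EuclideanSpace ℝ W := EuclideanSpace.single (1 : W) (1 : ℝ) with hδdef
  -- power expansion
  have hpow : ∀ (k : ℕ) (x : EuclideanSpace ℝ W),
      ((T cs) ^ k) x = ∑ i, ((μ i) ^ k * b.repr x i) • b i := by
    intro k
    induction k with
    | zero =>
        intro x
        simp only [pow_zero, Module.End.one_apply, one_mul]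
        exact (b.sum_repr x).symm
    | succ k ih =>
        intro x
        rw [pow_succ', Module.End.mul_apply, ih x, map_sum]
        refine Finset.sum_congr rfl fun i _ => ?_
        rw [map_smul, hb i, smul_smul]
        congr 1
        ring
  -- the limit vector
  set L : EuclideanSpace ℝ W :=
    ∑ i, ((if (μ i) ^ 2 = 1 then (1:ℝ) else 0) * b.repr δ i) • b i with hLdef
  have reprL : ∀ i, b.repr L i = (if (μ i) ^ 2 = 1 then (1:ℝ) else 0) * b.repr δ i := by
    intro i
    have hterm : ∀ j, b.repr (((if (μ j) ^ 2 = 1 then (1:ℝ) else 0) * b.repr δ j) • b j) i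
        = ((if (μ j) ^ 2 = 1 then (1:ℝ) else 0) * b.repr δ j) * (if i = j then 1 else 0) := by
      intro j
      rw [map_smul]
      show ((if (μ j) ^ 2 = 1 then (1:ℝ) else 0) * b.repr δ j) * (b.repr (b j)) i = _
      rw [b.repr_self, EuclideanSpace.single_apply]
    rw [hLdef, map_sum, WithLp.ofLp_sum, Finset.sum_apply, Finset.sum_congr rfl fun j _ => hterm j,
      Finset.sum_mul_boole]
    simp
  have hE_repr : ∀ y : EuclideanSpace ℝ W, T cs (T cs y) = y →
      ∀ i, (μ i) ^ 2 ≠ 1 → b.repr y i = 0 := by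
    intro y hy i hne
    have h : b.repr (T cs (T cs y)) i = b.repr y i := by rw [hy]
    rw [repr_T, repr_T] at h
    have h2 : ((μ i) ^ 2 - 1) * b.repr y i = 0 := by linear_combination h
    rcases mul_eq_zero.mp h2 with h' | h'
    · exact absurd (by linarith : (μ i) ^ 2 = 1) hne
    · exact h'
  have innerE : ∀ y : EuclideanSpace ℝ W, T cs (T cs y) = y →
      (inner ℝ y L : ℝ) = inner ℝ y δ := by
    intro y hy
    rw [← b.repr.inner_map_map y L, ← b.repr.inner_map_map y δ,
      PiLp.inner_apply, PiLp.inner_apply]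
    refine Finset.sum_congr rfl fun i _ => ?_
    simp only [RCLike.inner_apply', starRingEnd_apply, star_trivial]
    rw [reprL i]
    by_cases h : (μ i) ^ 2 = 1
    · simp [h]
    · rw [hE_repr y hy i h]
      simp
  have hLE : T cs (T cs L) = L := by
    apply b.repr.injective
    ext i
    show b.repr (T cs (T cs L)) i = b.repr L i
    rw [repr_T, repr_T, reprL i]
    by_cases h : (μ i) ^ 2 = 1
    · simp only [h, if_true, one_mul]
      calc μ i * (μ i * b.repr δ i) = (μ i) ^ 2 * b.repr δ i := by ring
        _ = b.repr δ i := by rw [h, one_mul]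
    · simp [h]
  have honeE : T cs (T cs (one : EuclideanSpace ℝ W)) = one := by
    rw [T_one, T_one]
  have hsgE : T cs (T cs (sg cs)) = sg cs := by
    rw [T_sg, map_neg, T_sg, neg_neg]
  -- decompose members of the ±1 eigenspace sum
  have hdecomp : ∀ y : EuclideanSpace ℝ W, T cs (T cs y) = y →
      ∃ c d : ℝ, ∀ v, y v = c + d * sg cs v := by
    intro y hy
    have hTu : T cs ((2:ℝ)⁻¹ • (y + T cs y)) = (2:ℝ)⁻¹ • (y + T cs y) := by
      rw [map_smul, map_add, hy, add_comm]
    have hTv : T cs ((2:ℝ)⁻¹ • (y - T cs y)) = -((2:ℝ)⁻¹ • (y - T cs y)) := by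
      rw [map_smul, map_sub, hy, ← neg_sub, smul_neg]
    have hu_const : ∀ a, ((2:ℝ)⁻¹ • (y + T cs y) : EuclideanSpace ℝ W) a
        = ((2:ℝ)⁻¹ • (y + T cs y) : EuclideanSpace ℝ W) 1 :=
      fun a => fixed_const cs _ hTu a 1
    obtain ⟨d, hd⟩ := anti_const cs _ hTv
    refine ⟨((2:ℝ)⁻¹ • (y + T cs y) : EuclideanSpace ℝ W) 1, d, fun a => ?_⟩
    have h1 := hu_const a
    have h2 := hd a
    have e1 : ((2:ℝ)⁻¹ • (y + T cs y) : EuclideanSpace ℝ W) a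
        = (2:ℝ)⁻¹ * (y a + T cs y a) := rfl
    have e2 : ((2:ℝ)⁻¹ • (y - T cs y) : EuclideanSpace ℝ W) a
        = (2:ℝ)⁻¹ * (y a - T cs y a) := rfl
    rw [e2] at h2
    rw [e1] at h1
    rw [← h1, mul_comm (sg cs a) d] at *
    nlinarith [h1, h2]
  -- counting
  set Ecard := (univ.filter fun v : W => Even (cs.length v)).card with hEdef
  set Ocard := (univ.filter fun v : W => ¬ Even (cs.length v)).card with hOdef
  have hsg_ite : ∀ v : W, sg cs v = if Even (cs.length v) then (1:ℝ) else -1 := fun _ => rfl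
  have hsum_sg : ∑ v : W, sg cs v = 0 := by
    have h := sum_mulLeft (cs.simple (Classical.arbitrary B)) (fun v => sg cs v)
    simp only [sg_simple_mul cs, Finset.sum_neg_distrib] at h
    linarith
  have hsum_ite : ∑ v : W, sg cs v = (Ecard : ℝ) - (Ocard : ℝ) := by
    simp_rw [hsg_ite]
    rw [Finset.sum_ite, Finset.sum_const, Finset.sum_const]
    simp only [nsmul_eq_mul, mul_one, mul_neg, hEdef, hOdef]
    ring
  have hEO : (Ecard : ℝ) = (Ocard : ℝ) := by linarith
  have hEOcard : Ecard + Ocard = Fintype.card W := by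
    rw [hEdef, hOdef, Finset.card_filter_add_card_filter_not, Finset.card_univ]
  have hW2 : (Fintype.card W : ℝ) = 2 * (Ecard : ℝ) := by
    have hc := congrArg (Nat.cast : ℕ → ℝ) hEOcard
    push_cast at hc
    linarith
  have hEpos : 0 < Ecard := Finset.card_pos.mpr ⟨1, by simp [cs.length_one]⟩
  have hOpos : 0 < Ocard :=
    Finset.card_pos.mpr ⟨cs.simple (Classical.arbitrary B), by simp [cs.length_simple]⟩
  have hWpos : (0:ℝ) < Fintype.card W := by exact_mod_cast Fintype.card_pos
  -- inner products
  have hδ_apply : ∀ v : W, δ v = if v = 1 then (1:ℝ) else 0 := by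
    intro v
    rw [hδdef, EuclideanSpace.single_apply]
  have hip : ∀ x y : EuclideanSpace ℝ W, (inner ℝ x y : ℝ) = ∑ v, x v * y v := by
    intro x y
    simp only [PiLp.inner_apply, RCLike.inner_apply', starRingEnd_apply, star_trivial]
  have hone_δ : (inner ℝ (one : EuclideanSpace ℝ W) δ : ℝ) = 1 := by
    rw [hip]
    simp_rw [hδ_apply]
    simp [one]
  have hsg_δ : (inner ℝ (sg cs) δ : ℝ) = 1 := by
    rw [hip]
    have h : ∀ v : W, sg cs v * δ v = if v = 1 then sg cs v else 0 := by
      intro v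
      rw [hδ_apply]
      split <;> simp
    simp_rw [h]
    rw [Finset.sum_ite_eq' univ (1:W) (fun v => sg cs v), if_pos (mem_univ _), hsg_ite]
    simp [cs.length_one]
  have hone_one : (inner ℝ (one : EuclideanSpace ℝ W) (one : EuclideanSpace ℝ W) : ℝ)
      = Fintype.card W := by
    rw [hip]
    simp [one]
  have hone_sg : (inner ℝ (one : EuclideanSpace ℝ W) (sg cs) : ℝ) = 0 := by
    rw [hip]
    have h : ∀ v : W, (one : EuclideanSpace ℝ W) v * sg cs v = sg cs v := fun v => one_mul _
    simp_rw [h]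
    exact hsum_sg
  have hsg_one : (inner ℝ (sg cs) (one : EuclideanSpace ℝ W) : ℝ) = 0 := by
    rw [hip]
    have h : ∀ v : W, sg cs v * (one : EuclideanSpace ℝ W) v = sg cs v := fun v => mul_one _
    simp_rw [h]
    exact hsum_sg
  have hsg_sg : (inner ℝ (sg cs) (sg cs) : ℝ) = Fintype.card W := by
    rw [hip]
    simp_rw [sg_sq cs]
    simp
  set g : EuclideanSpace ℝ W := (Fintype.card W : ℝ)⁻¹ • (one + sg cs) with hgdef
  have hg_apply : ∀ v : W, g v = (Fintype.card W : ℝ)⁻¹ * (1 + sg cs v) := fun v => rfl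
  have hone_g : (inner ℝ (one : EuclideanSpace ℝ W) g : ℝ) = 1 := by
    rw [hgdef, real_inner_smul_right, inner_add_right, hone_one, hone_sg]
    field_simp
    simp
  have hsg_g : (inner ℝ (sg cs) g : ℝ) = 1 := by
    rw [hgdef, real_inner_smul_right, inner_add_right, hsg_one, hsg_sg]
    field_simp
    simp
  have hone_L : (inner ℝ (one : EuclideanSpace ℝ W) L : ℝ) = 1 := by
    rw [innerE _ honeE]
    exact hone_δ
  have hsg_L : (inner ℝ (sg cs) L : ℝ) = 1 := by
    rw [innerE _ hsgE]
    exact hsg_δ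
  -- L = g
  obtain ⟨c1, d1, hcd⟩ := hdecomp L hLE
  have hLvec : L = c1 • (one : EuclideanSpace ℝ W) + d1 • sg cs := by
    ext v
    show L v = (c1 • (one : EuclideanSpace ℝ W) + d1 • sg cs) v
    have : (c1 • (one : EuclideanSpace ℝ W) + d1 • sg cs) v = c1 * 1 + d1 * sg cs v := rfl
    rw [this, hcd v, mul_one]
  have hgvec : g = (Fintype.card W : ℝ)⁻¹ • (one : EuclideanSpace ℝ W)
      + (Fintype.card W : ℝ)⁻¹ • sg cs := by
    rw [hgdef, smul_add]
  have hdiff : L - g = (c1 - (Fintype.card W : ℝ)⁻¹) • (one : EuclideanSpace ℝ W)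
      + (d1 - (Fintype.card W : ℝ)⁻¹) • sg cs := by
    rw [hLvec, hgvec]
    module
  have hone_diff : (inner ℝ (one : EuclideanSpace ℝ W) (L - g) : ℝ) = 0 := by
    rw [inner_sub_right, hone_L, hone_g]
    ring
  have hsg_diff : (inner ℝ (sg cs) (L - g) : ℝ) = 0 := by
    rw [inner_sub_right, hsg_L, hsg_g]
    ring
  have hLg : L = g := by
    have hself : (inner ℝ (L - g) (L - g) : ℝ) = 0 := by
      nth_rewrite 1 [hdiff]
      rw [inner_add_left, real_inner_smul_left, real_inner_smul_left, hone_diff, hsg_diff]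
      ring
    exact sub_eq_zero.mp (inner_self_eq_zero.mp hself)
  -- relation between powers of σ and powers of T
  have hmulσ : ∀ (f : MonoidAlgebra ℝ W) (v : W),
      (σ * f).coeff v = (Fintype.card B : ℝ)⁻¹ * ∑ i, f.coeff (cs.simple i * v) := by
    intro f v
    rw [hσ, smul_mul_assoc, MonoidAlgebra.coeff_smul_apply, smul_eq_mul, Finset.sum_mul,
      MonoidAlgebra.coeff_sum, Finsupp.finset_sum_apply]
    congr 1
    refine Finset.sum_congr rfl fun i _ => ?_
    rw [MonoidAlgebra.coeff_single_mul_apply, cs.inv_simple, one_mul]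
  have hσpow : ∀ (m : ℕ) (v : W), (σ ^ m).coeff v = (((T cs) ^ m) δ) v := by
    intro m
    induction m with
    | zero =>
        intro v
        rw [pow_zero, pow_zero, MonoidAlgebra.one_def, Module.End.one_apply,
          MonoidAlgebra.coeff_single_apply, hδ_apply]
        by_cases h : v = 1 <;> simp [h, eq_comm]
    | succ m ih =>
        intro v
        rw [pow_succ' σ m, hmulσ, pow_succ' (T cs) m, Module.End.mul_apply, T_apply]
        congr 1
        exact Finset.sum_congr rfl fun i _ => ih _
  -- convergence of even powers of T
  have heven : ∀ v : W,
      Tendsto (fun k : ℕ => (((T cs) ^ (2 * k)) δ) v) atTop (nhds (L v)) := by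
    intro v
    have hterm : ∀ k : ℕ, (((T cs) ^ (2 * k)) δ) v
        = ∑ i, ((μ i) ^ 2) ^ k * (b.repr δ i * b i v) := by
      intro k
      rw [hpow (2 * k) δ, WithLp.ofLp_sum, Finset.sum_apply]
      refine Finset.sum_congr rfl fun i _ => ?_
      show ((μ i) ^ (2 * k) * b.repr δ i) * b i v = _
      rw [pow_mul]
      ring
    have hLv : L v = ∑ i, (if (μ i) ^ 2 = 1 then (1:ℝ) else 0) * (b.repr δ i * b i v) := by
      rw [hLdef, WithLp.ofLp_sum, Finset.sum_apply]
      refine Finset.sum_congr rfl fun i _ => ?_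
      show ((if (μ i) ^ 2 = 1 then (1:ℝ) else 0) * b.repr δ i) * b i v = _
      ring
    rw [hLv]
    refine Tendsto.congr (fun k => (hterm k).symm) ?_
    refine tendsto_finset_sum _ fun i _ => ?_
    by_cases h : (μ i) ^ 2 = 1
    · simp only [h, one_pow]
      exact tendsto_const_nhds
    · have h1 : (μ i) ^ 2 < 1 := lt_of_le_of_ne (hμ1 i) h
      have h0 := tendsto_pow_atTop_nhds_zero_of_lt_one (sq_nonneg (μ i)) h1
      have h2 := h0.mul_const (b.repr δ i * b i v)
      rw [zero_mul] at h2
      simpa [h] using h2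
  -- conclusion
  intro w
  constructor
  · have h1 := (heven w).congr (fun k => (hσpow (2 * k) w).symm)
    have hval : L w = if Even (cs.length w) then
        (Nat.card {u : W // Even (cs.length u)} : ℝ)⁻¹ else 0 := by
      rw [hLg]
      have hNatcard : (Nat.card {u : W // Even (cs.length u)} : ℝ) = (Ecard : ℝ) := by
        rw [Nat.card_eq_fintype_card, Fintype.card_subtype, hEdef]
      by_cases h : Even (cs.length w)
      · rw [if_pos h, hg_apply, hNatcard, hsg_ite, if_pos h, hW2]
        have hE0 : (Ecard : ℝ) ≠ 0 := by
          exact_mod_cast hEpos.ne'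
        field_simp
        norm_num
      · rw [if_neg h, hg_apply, hsg_ite, if_neg h]
        ring
    rw [← hval]
    exact h1
  · have hseq : ∀ k : ℕ, (σ ^ (2 * k + 1)).coeff w
        = (Fintype.card B : ℝ)⁻¹ * ∑ i, (((T cs) ^ (2 * k)) δ) (cs.simple i * w) := by
      intro k
      rw [hσpow (2 * k + 1) w, pow_succ' (T cs) (2 * k), Module.End.mul_apply, T_apply]
    have hlim : Tendsto (fun k : ℕ => (Fintype.card B : ℝ)⁻¹ *
        ∑ i, (((T cs) ^ (2 * k)) δ) (cs.simple i * w)) atTop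
        (nhds ((Fintype.card B : ℝ)⁻¹ * ∑ i, L (cs.simple i * w))) :=
      (tendsto_finset_sum _ fun i _ => heven (cs.simple i * w)).const_mul _
    have h2 := hlim.congr (fun k => (hseq k).symm)
    have hval : (Fintype.card B : ℝ)⁻¹ * ∑ i, L (cs.simple i * w)
        = if ¬ Even (cs.length w) then
          (Nat.card {u : W // ¬ Even (cs.length u)} : ℝ)⁻¹ else 0 := by
      have hLsi : ∀ i : B, L (cs.simple i * w)
          = (Fintype.card W : ℝ)⁻¹ * (1 - sg cs w) := by
        intro i
        rw [hLg, hg_apply, sg_simple_mul]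
        ring
      simp_rw [hLsi]
      rw [Finset.sum_const, Finset.card_univ, nsmul_eq_mul]
      have hB : (Fintype.card B : ℝ) ≠ 0 := by
        exact_mod_cast Fintype.card_ne_zero
      have hNatcardO : (Nat.card {u : W // ¬ Even (cs.length u)} : ℝ) = (Ocard : ℝ) := by
        rw [Nat.card_eq_fintype_card, Fintype.card_subtype, hOdef]
      by_cases h : Even (cs.length w)
      · rw [if_neg (not_not_intro h), hsg_ite, if_pos h]
        field_simp
        simp
      · rw [if_pos h, hsg_ite, if_neg h, hNatcardO]
        have hW2' : (Fintype.card W : ℝ) = 2 * (Ocard : ℝ) := by rw [hW2, hEO]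
        rw [hW2']
        have hO0 : (Ocard : ℝ) ≠ 0 := by
          exact_mod_cast hOpos.ne'
        field_simp
        norm_num
    rw [← hval]
    exact h2
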